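/- Let a > 0, h ≥ 0, and let σ = σ_{a,h} ⊂ ℝ² be the spiral-like curve formed by two families of concentric half-circles of radii (1+2i)a, i ∈ ℕ, centered at x₀ = (0, h/2) in the upper half-plane {p₂ ≥ h/2} and at y₀ = (2a, −h/2) in the lower half-plane {p₂ ≤ −h/2}, joined by vertical segments in the strip {−h/2 ≤ p₂ ≤ h/2}. Then the signed distance function to σ takes values exactly in [−a, a]: every point of ℝ² lies at distance at most a from σ. -/

import Mathlib

/-- The curve `σ_{a,h} ⊂ ℝ²`: two families of concentric half-circles of radii
`(1+2i)a` around `x₀ = (0, h/2)` (in the upper half-plane `{p₂ ≥ h/2}`) and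
around `y₀ = (2a, -h/2)` (in the lower half-plane `{p₂ ≤ -h/2}`),
joined by the vertical segments `{(2j+1)a} × [-h/2, h/2]`. -/
def sigmaCurve (a h : ℝ) : Set (EuclideanSpace ℝ (Fin 2)) :=
  {p | (∃ i : ℕ, Real.sqrt ((p 0) ^ 2 + (p 1 - h / 2) ^ 2) = (1 + 2 * i) * a) ∧ h / 2 ≤ p 1} ∪
  {p | (∃ i : ℕ, Real.sqrt ((p 0 - 2 * a) ^ 2 + (p 1 + h / 2) ^ 2) = (1 + 2 * i) * a) ∧
        p 1 ≤ -(h / 2)} ∪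
  {p | (∃ j : ℤ, p 0 = (2 * j + 1) * a) ∧ p 1 ∈ Set.Icc (-(h / 2)) (h / 2)}

namespace SigmaAux

/-- A point of the plane given by its two coordinates. -/
noncomputable def pt (x y : ℝ) : EuclideanSpace ℝ (Fin 2) := WithLp.toLp 2 (fun i => if i = 0 then x else y)

@[simp] lemma pt_zero (x y : ℝ) : pt x y 0 = x := rfl

@[simp] lemma pt_one (x y : ℝ) : pt x y 1 = y := rfl

lemma dist_formula (p q : EuclideanSpace ℝ (Fin 2)) :
    dist p q = Real.sqrt ((p 0 - q 0) ^ 2 + (p 1 - q 1) ^ 2) := by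
  rw [EuclideanSpace.dist_eq, Fin.sum_univ_two]
  simp [Real.dist_eq, sq_abs]

lemma coord0_le (p q : EuclideanSpace ℝ (Fin 2)) : |p 0 - q 0| ≤ dist p q := by
  rw [dist_formula, ← Real.sqrt_sq_eq_abs]
  exact Real.sqrt_le_sqrt (by nlinarith [sq_nonneg (p 1 - q 1)])

lemma coord1_le (p q : EuclideanSpace ℝ (Fin 2)) : |p 1 - q 1| ≤ dist p q := by
  rw [dist_formula, ← Real.sqrt_sq_eq_abs]
  exact Real.sqrt_le_sqrt (by nlinarith [sq_nonneg (p 0 - q 0)])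

/-- Key step: given any `(u, v)`, there is a point `(x, y)` on a circle of radius
`(1+2i)a` around the origin, with `y` on the same side as `v`, within distance `a`. -/
lemma circle_step (a : ℝ) (ha : 0 < a) (u v : ℝ) :
    ∃ (i : ℕ) (x y : ℝ), Real.sqrt (x ^ 2 + y ^ 2) = (1 + 2 * (i : ℝ)) * a ∧
      (0 ≤ v → 0 ≤ y) ∧ (v ≤ 0 → y ≤ 0) ∧ Real.sqrt ((u - x) ^ 2 + (v - y) ^ 2) ≤ a := by
  set r := Real.sqrt (u ^ 2 + v ^ 2) with hrdef
  have hr0 : 0 ≤ r := Real.sqrt_nonneg _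
  by_cases hr : r = 0
  · -- the center: take the point `(a, 0)` on the first circle
    have huv : u ^ 2 + v ^ 2 = 0 := by
      have := Real.sqrt_eq_zero (by positivity) |>.mp hr
      exact this
    have hu : u = 0 := by nlinarith [sq_nonneg u, sq_nonneg v]
    have hv : v = 0 := by nlinarith [sq_nonneg u, sq_nonneg v]
    refine ⟨0, a, 0, ?_, fun _ => le_refl 0, fun _ => le_refl 0, ?_⟩
    · rw [show a ^ 2 + (0:ℝ) ^ 2 = a ^ 2 by ring, Real.sqrt_sq ha.le]; push_cast; ring
    · rw [hu, hv, show (0 - a) ^ 2 + ((0:ℝ) - 0) ^ 2 = a ^ 2 by ring, Real.sqrt_sq ha.le]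
  · have hr' : 0 < r := lt_of_le_of_ne hr0 (Ne.symm hr)
    set i := ⌊r / (2 * a)⌋₊ with hidef
    set R := (1 + 2 * (i : ℝ)) * a with hRdef
    have hR : 0 < R := by positivity
    set c := R / r with hcdef
    have hc : 0 ≤ c := by positivity
    have hcr : c * r = R := div_mul_cancel₀ R hr
    have hfl1 : (i : ℝ) ≤ r / (2 * a) := Nat.floor_le (by positivity)
    have hfl2 : r / (2 * a) < i + 1 := Nat.lt_floor_add_one _
    have h2a : (0:ℝ) < 2 * a := by linarith
    have hlo : (i : ℝ) * (2 * a) ≤ r := (le_div_iff₀ h2a).mp hfl1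
    have hhi : r < ((i : ℝ) + 1) * (2 * a) := (div_lt_iff₀ h2a).mp hfl2
    have hbound : |r - R| ≤ a := by
      rw [abs_le]; constructor <;> [nlinarith; nlinarith]
    refine ⟨i, c * u, c * v, ?_, fun hv => mul_nonneg hc hv,
      fun hv => mul_nonpos_of_nonneg_of_nonpos hc hv, ?_⟩
    · rw [show (c * u) ^ 2 + (c * v) ^ 2 = c ^ 2 * (u ^ 2 + v ^ 2) by ring,
        Real.sqrt_mul (sq_nonneg c), Real.sqrt_sq hc, ← hrdef, hcr]
    · have hr2 : r ^ 2 = u ^ 2 + v ^ 2 := Real.sq_sqrt (by positivity)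
      have hsq : (u - c * u) ^ 2 + (v - c * v) ^ 2 = (r - R) ^ 2 := by
        rw [← hcr]; linear_combination (-(1 - c) ^ 2) * hr2
      rw [hsq, Real.sqrt_sq_eq_abs]
      exact hbound
end SigmaAux

open SigmaAux in
/-- Every point of the plane lies within distance `a` of `σ_{a,h}`, and this
bound is sharp: the supremum of the distance to `σ_{a,h}` equals `a`. -/
theorem sigmaCurve_neighborhood (a h : ℝ) (ha : 0 < a) (hh : 0 ≤ h) :
    (∀ p : EuclideanSpace ℝ (Fin 2), Metric.infDist p (sigmaCurve a h) ≤ a) ∧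
    (⨆ p : EuclideanSpace ℝ (Fin 2), Metric.infDist p (sigmaCurve a h)) = a := by
  -- Part 1: every point is within distance `a` of the curve.
  have key : ∀ p : EuclideanSpace ℝ (Fin 2), Metric.infDist p (sigmaCurve a h) ≤ a := by
    intro p
    by_cases h1 : h / 2 ≤ p 1
    · -- upper half-plane: use the upper circles
      obtain ⟨i, x, y, hxy, hy, -, hd⟩ := circle_step a ha (p 0) (p 1 - h / 2)
      have hy' : 0 ≤ y := hy (by linarith)
      have hmem : pt x (h / 2 + y) ∈ sigmaCurve a h := by
        refine Or.inl (Or.inl ?_)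
        refine ⟨⟨i, ?_⟩, by simp; linarith⟩
        simpa using hxy
      refine le_trans (Metric.infDist_le_dist_of_mem hmem) ?_
      rw [dist_formula, pt_zero, pt_one,
        show p 1 - (h / 2 + y) = (p 1 - h / 2) - y by ring]
      exact hd
    · by_cases h2 : p 1 ≤ -(h / 2)
      · -- lower half-plane: use the lower circles
        obtain ⟨i, x, y, hxy, -, hy, hd⟩ := circle_step a ha (p 0 - 2 * a) (p 1 + h / 2)
        have hy' : y ≤ 0 := hy (by linarith)
        have hmem : pt (2 * a + x) (-(h / 2) + y) ∈ sigmaCurve a h := by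
          refine Or.inl (Or.inr ?_)
          refine ⟨⟨i, ?_⟩, by simp; linarith⟩
          simp only [pt_zero, pt_one]
          rw [show 2 * a + x - 2 * a = x by ring, show -(h / 2) + y + h / 2 = y by ring]
          exact hxy
        refine le_trans (Metric.infDist_le_dist_of_mem hmem) ?_
        rw [dist_formula, pt_zero, pt_one,
          show p 0 - (2 * a + x) = (p 0 - 2 * a) - x by ring,
          show p 1 - (-(h / 2) + y) = (p 1 + h / 2) - y by ring]
        exact hd
      · -- the strip: use the vertical segments
        push_neg at h1 h2
        set j := ⌊p 0 / (2 * a)⌋ with hjdef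
        have h2a : (0:ℝ) < 2 * a := by linarith
        have hfl1 : (j : ℝ) ≤ p 0 / (2 * a) := Int.floor_le _
        have hfl2 : p 0 / (2 * a) < j + 1 := Int.lt_floor_add_one _
        have hlo : (j : ℝ) * (2 * a) ≤ p 0 := (le_div_iff₀ h2a).mp hfl1
        have hhi : p 0 < ((j : ℝ) + 1) * (2 * a) := (div_lt_iff₀ h2a).mp hfl2
        have hmem : pt ((2 * (j:ℝ) + 1) * a) (p 1) ∈ sigmaCurve a h := by
          refine Or.inr ⟨⟨j, by simp⟩, ?_⟩
          simp only [pt_one, Set.mem_Icc]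
          exact ⟨h2.le, h1.le⟩
        refine le_trans (Metric.infDist_le_dist_of_mem hmem) ?_
        rw [dist_formula, pt_zero, pt_one, sub_self,
          show (0:ℝ) ^ 2 = 0 by ring, add_zero, Real.sqrt_sq_eq_abs, abs_le]
        constructor <;> nlinarith
  -- The curve is nonempty.
  have hne : (sigmaCurve a h).Nonempty := by
    refine ⟨pt a (h / 2), Or.inr ⟨⟨0, by simp⟩, ?_⟩⟩
    simp only [pt_one, Set.mem_Icc]
    constructor <;> linarith
  -- Part 2: the point `(0, h/2 + 2a)` is at distance exactly `a` from the curve.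
  set pstar := pt 0 (h / 2 + 2 * a) with hpstar
  have hbound : ∀ q ∈ sigmaCurve a h, a ≤ dist pstar q := by
    rintro q hq
    rcases hq with (⟨⟨k, hk⟩, hq1⟩ | ⟨⟨k, hk⟩, hq1⟩) | ⟨⟨j, hj⟩, hq1, hq2⟩
    · -- upper circles: reverse triangle inequality around `x₀ = (0, h/2)`
      have hdq : dist q (pt 0 (h / 2)) = (1 + 2 * (k:ℝ)) * a := by
        rw [dist_formula, pt_zero, pt_one, sub_zero]; exact hk
      have hdp : dist pstar (pt 0 (h / 2)) = 2 * a := by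
        rw [dist_formula, pt_zero, pt_one, pt_zero, pt_one, sub_zero,
          show h / 2 + 2 * a - h / 2 = 2 * a by ring,
          show (0:ℝ) ^ 2 + (2 * a) ^ 2 = (2 * a) ^ 2 by ring, Real.sqrt_sq (by linarith)]
      have htri : |dist q (pt 0 (h / 2)) - dist pstar (pt 0 (h / 2))| ≤ dist q pstar :=
        abs_dist_sub_le _ _ _
      rw [hdq, hdp] at htri
      have hk1 : (1:ℝ) ≤ |2 * (k:ℝ) - 1| := by
        rcases Nat.eq_zero_or_pos k with hk0 | hk0
        · subst hk0; norm_num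
        · have : (1:ℝ) ≤ (k:ℝ) := by exact_mod_cast hk0
          rw [abs_of_nonneg (by linarith)]; linarith
      have habs : a ≤ |(1 + 2 * (k:ℝ)) * a - 2 * a| := by
        rw [show (1 + 2 * (k:ℝ)) * a - 2 * a = (2 * (k:ℝ) - 1) * a by ring, abs_mul,
          abs_of_pos ha]
        nlinarith
      rw [dist_comm]
      linarith
    · -- lower circles: vertical distance is at least `2a`
      have := coord1_le pstar q
      rw [hpstar, pt_one] at this
      have h1 : h / 2 + 2 * a - q 1 ≤ |h / 2 + 2 * a - q 1| := le_abs_self _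
      have : a ≤ |h / 2 + 2 * a - q 1| := by
        refine le_trans ?_ h1; linarith
      linarith [coord1_le pstar q, le_abs_self (h / 2 + 2 * a - q 1)]
    · -- vertical segments: horizontal distance is at least `a`
      have hco := coord0_le pstar q
      rw [hpstar, pt_zero, hj, zero_sub, abs_neg] at hco
      have hj1 : (1:ℝ) ≤ |2 * (j:ℝ) + 1| := by
        have h0 : (2 * j + 1 : ℤ) ≠ 0 := by omega
        have := Int.one_le_abs h0
        have h2 : (1:ℝ) ≤ |((2 * j + 1 : ℤ) : ℝ)| := by
          rw [← Int.cast_abs]; exact_mod_cast this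
        push_cast at h2; exact h2
      have : a ≤ |(2 * (j:ℝ) + 1) * a| := by
        rw [abs_mul, abs_of_pos ha]; nlinarith
      linarith
  have hge : a ≤ Metric.infDist pstar (sigmaCurve a h) := by
    by_contra hcon
    push_neg at hcon
    rw [Metric.infDist_lt_iff hne] at hcon
    obtain ⟨q, hq, hlt⟩ := hcon
    exact absurd hlt (not_lt.2 (hbound q hq))
  have heq : Metric.infDist pstar (sigmaCurve a h) = a := le_antisymm (key pstar) hge
  refine ⟨key, le_antisymm (ciSup_le key) ?_⟩
  calc a = Metric.infDist pstar (sigmaCurve a h) := heq.symm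
    _ ≤ ⨆ p : EuclideanSpace ℝ (Fin 2), Metric.infDist p (sigmaCurve a h) :=
        le_ciSup ⟨a, by rintro x ⟨p, rfl⟩; exact key p⟩ pstar
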